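/- Let M = [[A, B], [C, D]] ∈ ℂ^{2n×2n} where A, D, BC, CB ∈ ℂ^{n×n} are *-DMP. If AB = BD, DC = CA, A*B = BD*, D*C = CA*, and A^D B D^D C is nilpotent, then M is *-DMP. -/
import Mathlib


/-- Moore–Penrose inverse. -/
def IsMP {A : Type*} [Ring A] [StarRing A] (a x : A) : Prop :=
  a * x * a = a ∧ x * a * x = x ∧ star (a * x) = a * x ∧ star (x * a) = x * a

/-- Group inverse. -/
def IsGroupInv {A : Type*} [Ring A] (a x : A) : Prop :=
  a * x * a = a ∧ x * a * x = x ∧ a * x = x * a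

/-- `a` is *-DMP: some power `a ^ n` (`n ≥ 1`) has a common Moore–Penrose and group inverse. -/
def IsStarDMP {A : Type*} [Ring A] [StarRing A] (a : A) : Prop :=
  ∃ n : ℕ, 1 ≤ n ∧ ∃ x : A, IsMP (a ^ n) x ∧ IsGroupInv (a ^ n) x

/-- `x` is the Drazin inverse of `a` (with some index `k`). -/
def IsDrazin {A : Type*} [Ring A] (a x : A) : Prop :=
  ∃ k : ℕ, x * a ^ (k + 1) = a ^ k ∧ a * x ^ 2 = x ∧ a * x = x * a

/-- `x` is the pseudo core inverse of `a`. -/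
def IsPCore {A : Type*} [Ring A] [StarRing A] (a x : A) : Prop :=
  ∃ k : ℕ, x * a ^ (k + 1) = a ^ k ∧ a * x ^ 2 = x ∧ star (a * x) = a * x

/-- EP element: common group and Moore–Penrose inverse. -/
def IsEP {A : Type*} [Ring A] [StarRing A] (a : A) : Prop :=
  ∃ x : A, IsMP a x ∧ IsGroupInv a x

open Matrix

section RingLemmas
variable {R : Type*} [Ring R]

lemma drazin_shift {a x : R} {k : ℕ} (h1 : x * a ^ (k+1) = a ^ k) :
    ∀ j, k ≤ j → x * a ^ (j+1) = a ^ j := by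
  intro j hj
  induction j, hj using Nat.le_induction with
  | base => exact h1
  | succ j hj ih =>
    have : a ^ (j+1+1) = a ^ (j+1) * a := by rw [pow_succ]
    rw [this, ← mul_assoc, ih, ← pow_succ]

lemma drazin_comm {a x c : R} (hd : IsDrazin a x) (hc : c * a = a * c) : c * x = x * c := by
  obtain ⟨k, h1, h2, h3⟩ := hd
  set K := k + 1 with hK
  have h1' : x * a ^ (K+1) = a ^ K := drazin_shift h1 K (Nat.le_succ k)
  have cax : Commute a x := h3
  have hxx : a * x * x = x := by rw [mul_assoc, ← sq, h2]
  have hxe : x * (a * x) = x := by rw [← mul_assoc, ← h3, hxx]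
  have hee : IsIdempotentElem (a*x) := by
    unfold IsIdempotentElem; rw [mul_assoc, hxe]
  have hxa : x^K * a^K = a * x := by
    rw [← cax.symm.mul_pow, ← h3, hee.pow_succ_eq k]
  have hax : a^K * x^K = a * x := by
    rw [← cax.mul_pow, hee.pow_succ_eq k]
  have cca : Commute c a := hc
  have caK : Commute c (a^K) := cca.pow_right K
  have ceaK : Commute (a*x) (a^K) :=
    Commute.mul_left ((Commute.refl a).pow_right K) (cax.symm.pow_right K)
  have step1 : a^K * (a*x) = a^K := by
    rw [← mul_assoc, ← pow_succ, (cax.pow_left (K+1)).eq, h1']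
  have step2 : (a*x) * a^K = a^K := by
    rw [ceaK.eq, step1]
  have hce : c * (a*x) = (a*x) * c := by
    have ec : (a*x)*c = (a*x)*(c*(a*x)) := by
      calc (a*x)*c = x^K * a^K * c := by rw [hxa]
        _ = x^K * (c * a^K) := by rw [mul_assoc, caK.eq]
        _ = x^K * (c * (a^K * (a*x))) := by rw [step1]
        _ = x^K * (c * a^K) * (a*x) := by rw [← mul_assoc c, ← mul_assoc]
        _ = x^K * a^K * c * (a*x) := by rw [caK.eq, ← mul_assoc (x^K) (a^K) c]
        _ = (a*x)*(c*(a*x)) := by rw [hxa, mul_assoc]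
    have ce : c*(a*x) = (a*x)*(c*(a*x)) := by
      calc c*(a*x) = c*(a^K * x^K) := by rw [hax]
        _ = (c * a^K) * x^K := by rw [mul_assoc]
        _ = (a^K * c) * x^K := by rw [caK.eq]
        _ = (((a*x) * a^K) * c) * x^K := by rw [step2]
        _ = (a*x) * ((c * a^K) * x^K) := by rw [mul_assoc (a*x) (a^K) c, ← caK.eq, mul_assoc (a*x)]
        _ = (a*x) * (c * (a^K * x^K)) := by rw [mul_assoc c]
        _ = (a*x)*(c*(a*x)) := by rw [hax]
    rw [ce, ← ec]
  have final : x * c = c * x := by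
    calc x * c = (x * (a*x)) * c := by rw [hxe]
      _ = x * ((a*x) * c) := by rw [mul_assoc]
      _ = x * (c * (a*x)) := by rw [← hce]
      _ = x * ((c * a) * x) := by rw [← mul_assoc c a x]
      _ = x * ((a * c) * x) := by rw [hc]
      _ = (x * a) * (c * x) := by rw [mul_assoc a c x, ← mul_assoc]
      _ = (a * x) * (c * x) := by rw [h3]
      _ = ((a*x) * c) * x := by rw [← mul_assoc]
      _ = (c * (a*x)) * x := by rw [← hce]
      _ = c * ((a*x) * x) := by rw [mul_assoc]
      _ = c * x := by rw [hxx]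
  exact final.symm

lemma groupinv_drazin {a x : R} (h : IsGroupInv a x) : IsDrazin a x := by
  obtain ⟨g1, g2, g3⟩ := h
  refine ⟨1, ?_, ?_, g3⟩
  · rw [pow_two, pow_one, ← mul_assoc, ← g3, g1]
  · rw [pow_two, ← mul_assoc, g3, g2]

lemma drazin_pow {a x : R} (hd : IsDrazin a x) {m : ℕ} (hm : 1 ≤ m) :
    IsDrazin (a^m) (x^m) := by
  obtain ⟨k, h1, h2, h3⟩ := hd
  have cax : Commute a x := h3
  refine ⟨k, ?_, ?_, (cax.pow_pow m m).eq⟩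
  · have key : ∀ i, x^i * a^(m*k + i) = a^(m*k) := by
      intro i
      induction i with
      | zero => simp
      | succ i ih =>
        show x^(i+1) * a^((m*k+i)+1) = a^(m*k)
        calc x^(i+1) * a^((m*k+i)+1)
            = x * ((x^i * a^(m*k+i)) * a) := by
              rw [pow_succ' x i, pow_succ a (m*k+i)]; noncomm_ring
          _ = x * (a^(m*k) * a) := by rw [ih]
          _ = x * a^(m*k+1) := by rw [← pow_succ]
          _ = a^(m*k) := drazin_shift h1 (m*k) (Nat.le_mul_of_pos_left k hm)
    have := key m
    rw [← pow_mul, ← pow_mul]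
    have e1 : m*(k+1) = m*k + m := by ring
    rw [e1]
    exact this
  · have c2 : Commute a (x^2) := cax.pow_right 2
    have hsw : (x^m)^2 = (x^2)^m := by rw [← pow_mul, ← pow_mul, Nat.mul_comm]
    rw [hsw, ← c2.mul_pow, h2]

lemma drazin_unique {a x y : R} (hx : IsDrazin a x) (hy : IsDrazin a y) : x = y := by
  obtain ⟨k, hx1, hx2, hx3⟩ := hx
  obtain ⟨l, hy1, hy2, hy3⟩ := hy
  have cax : Commute a x := hx3
  have cay : Commute a y := hy3
  have hxx' : a * x * x = x := by rw [mul_assoc, ← sq, hx2]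
  have hxx : x * x * a = x := by rw [← (cax.mul_right cax).eq, ← sq, hx2]
  have hyy : a * (y * y) = y := by rw [← sq, hy2]
  have hxe : x * (a * x) = x := by rw [← mul_assoc, ← hx3, hxx']
  have hye : y * (a * y) = y := by
    rw [hy3, ← mul_assoc, ← (cay.mul_right cay).eq, ← sq, hy2]
  have hee : IsIdempotentElem (a*x) := by
    unfold IsIdempotentElem; rw [mul_assoc, hxe]
  have exa : IsIdempotentElem (x*a) := by
    unfold IsIdempotentElem; rw [← hx3]; exact hee
  have eay : IsIdempotentElem (a*y) := by
    unfold IsIdempotentElem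
    rw [mul_assoc, ← mul_assoc y a y, ← cay.eq, mul_assoc a y y, hyy]
  have hxpow : ∀ j, x^(j+1) * a^j = x := by
    intro j
    induction j with
    | zero => simp
    | succ j ih =>
      have hcom : x * a^j = a^j * x := (cax.symm.pow_right j).eq
      calc x^(j+1+1) * a^(j+1)
          = x^(j+1) * (x * a^j) * a := by rw [pow_succ x (j+1), pow_succ a j]; noncomm_ring
        _ = x^(j+1) * (a^j * x) * a := by rw [hcom]
        _ = (x^(j+1) * a^j) * (x*a) := by noncomm_ring
        _ = x * (x*a) := by rw [ih]
        _ = (x*x)*a := by noncomm_ring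
        _ = x := hxx
  have hypow : ∀ j, a^j * y^(j+1) = y := by
    intro j
    induction j with
    | zero => simp
    | succ j ih =>
      have hcom2 : y * a^j = a^j * y := (cay.symm.pow_right j).eq
      calc a^(j+1) * y^(j+1+1)
          = a * (a^j * y) * y^(j+1) := by rw [pow_succ' a j, pow_succ' y (j+1)]; noncomm_ring
        _ = a * (y * a^j) * y^(j+1) := by rw [hcom2]
        _ = (a*y) * (a^j * y^(j+1)) := by noncomm_ring
        _ = (a*y) * y := by rw [ih]
        _ = a * (y*y) := by noncomm_ring
        _ = y := hyy
  have e1 : x = (x*a) * y := by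
    calc x = x^(l+1) * a^l := (hxpow l).symm
      _ = x^(l+1) * (y * a^(l+1)) := by rw [hy1]
      _ = x^(l+1) * (a^(l+1) * y) := by rw [(cay.pow_left (l+1)).symm.eq]
      _ = (x^(l+1) * a^(l+1)) * y := by rw [mul_assoc]
      _ = (x*a)^(l+1) * y := by rw [cax.symm.mul_pow]
      _ = (x*a) * y := by rw [exa.pow_succ_eq l]
  have e2 : y = (x*a) * y := by
    calc y = a^k * y^(k+1) := (hypow k).symm
      _ = (x * a^(k+1)) * y^(k+1) := by rw [hx1]
      _ = x * (a^(k+1) * y^(k+1)) := by rw [mul_assoc]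
      _ = x * (a*y)^(k+1) := by rw [cay.mul_pow]
      _ = x * (a*y) := by rw [eay.pow_succ_eq k]
      _ = (x*a) * y := by rw [← mul_assoc]
  rw [e1, ← e2]

/-- a*d is idempotent for a Drazin pair -/
lemma drazin_idem {a d : R} (hd : IsDrazin a d) : IsIdempotentElem (a*d) := by
  obtain ⟨k, h1, h2, h3⟩ := hd
  have hxx' : a * d * d = d := by rw [mul_assoc, ← sq, h2]
  have hxe : d * (a * d) = d := by rw [← mul_assoc, ← h3, hxx']
  unfold IsIdempotentElem; rw [mul_assoc, hxe]

lemma starDMP_proj {R : Type*} [Ring R] [StarRing R] {a d : R}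
    (hs : IsStarDMP a) (hd : IsDrazin a d) : star (a * d) = a * d := by
  obtain ⟨m, hm, x, hMP, hG⟩ := hs
  have hxd : IsDrazin (a^m) x := groupinv_drazin hG
  have hdm : IsDrazin (a^m) (d^m) := drazin_pow hd hm
  have hxeq : x = d^m := drazin_unique hxd hdm
  have cad : Commute a d := hd.choose_spec.2.2
  obtain ⟨m', rfl⟩ : ∃ m', m = m' + 1 := ⟨m - 1, by omega⟩
  have key : a * d = a^(m'+1) * x := by
    rw [hxeq, ← cad.mul_pow, (drazin_idem hd).pow_succ_eq m']
  rw [key]; exact hMP.2.2.1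

lemma starDMP_of_split {R : Type*} [Ring R] [StarRing R] {M h u : R}
    (hh : IsIdempotentElem h) (hstar : star h = h) (hMh : M*h = h*M)
    (huh : u*h = u) (hhu : h*u = u) (huM : u*M = h) (hMu : M*u = h)
    {t : ℕ} (hnil : (M*(1-h))^t = 0) : IsStarDMP M := by
  set m := t + 1 with hm
  have cMh : Commute M h := hMh
  have cM1h : Commute M (1-h) := (Commute.one_right M).sub_right cMh
  have h1h : IsIdempotentElem (1-h) := hh.one_sub
  have hMm0 : M^m * (1-h) = 0 := by
    have e1 : (M*(1-h))^m = M^m * (1-h) := by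
      rw [cM1h.mul_pow, h1h.pow_succ_eq t]
    have e2 : (M*(1-h))^m = 0 := by rw [pow_succ, hnil, zero_mul]
    rw [← e1, e2]
  have hMmh : M^m * h = M^m := by
    have := hMm0
    rw [mul_sub, mul_one, sub_eq_zero] at this
    exact this.symm
  have hhMm : h * M^m = M^m := by
    rw [(cMh.symm.pow_right m).eq, hMmh]
  have cMu : Commute M u := hMu.trans huM.symm
  have c2 : M^m * u^m = h := by
    rw [← cMu.mul_pow, hMu, hh.pow_succ_eq t]
  have c3 : u^m * M^m = h := by
    rw [← cMu.symm.mul_pow, huM, hh.pow_succ_eq t]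
  have hu : h * u^m = u^m := by
    rw [pow_succ' u t, ← mul_assoc, hhu]
  refine ⟨m, by omega, u^m, ⟨?_, ?_, ?_, ?_⟩, ⟨?_, ?_, ?_⟩⟩
  · rw [c2, hhMm]
  · rw [c3, hu]
  · rw [c2]; exact hstar
  · rw [c3]; exact hstar
  · rw [c2, hhMm]
  · rw [c3, hu]
  · rw [c2, c3]

lemma corner_unit {h p v n : R} (hpv : p*v = h) (hvp : v*p = h)
    (hvh : v*h = v) (hhv : h*v = v) (hhn : h*n = n) (hnh : n*h = n)
    (hnp : n*p = p*n) {t : ℕ} (hnt : n^(t+1) = 0) :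
    ∃ w, w*h = w ∧ h*w = w ∧ (p+n)*w = h ∧ w*(p+n) = h := by
  have hvn : v*n = n*v := by
    calc v*n = v*(n*h) := by rw [hnh]
      _ = v*(n*(p*v)) := by rw [hpv]
      _ = (v*(n*p))*v := by noncomm_ring
      _ = (v*(p*n))*v := by rw [hnp]
      _ = ((v*p)*n)*v := by rw [← mul_assoc]
      _ = (h*n)*v := by rw [hvp]
      _ = n*v := by rw [hhn]
  have cnv : Commute n v := hvn.symm
  set z : R := -(n*v) with hz
  have hhz : h*z = z := by rw [hz, mul_neg, ← mul_assoc, hhn]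
  have hzh : z*h = z := by rw [hz, neg_mul, mul_assoc, hvh]
  have cpz : Commute p z := by
    have e1 : p*(n*v) = n := by rw [← mul_assoc, ← hnp, mul_assoc, hpv, hnh]
    have e2 : (n*v)*p = n := by rw [mul_assoc, hvp, hnh]
    unfold Commute SemiconjBy
    rw [hz, mul_neg, neg_mul, e1, e2]
  have cnz : Commute n z := by
    have : n*(n*v) = (n*v)*n := by rw [mul_assoc, hvn]
    unfold Commute SemiconjBy
    rw [hz, mul_neg, neg_mul, this]
  have cvz : Commute v z := by
    have : v*(n*v) = (n*v)*v := by rw [← mul_assoc, hvn]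
    unfold Commute SemiconjBy
    rw [hz, mul_neg, neg_mul, this]
  have hzt : z^(t+1) = 0 := by
    rw [hz, neg_pow, cnv.mul_pow, hnt, zero_mul, mul_zero]
  set S2 : R := ∑ i ∈ Finset.range t, z^i with hS2
  set S : R := ∑ i ∈ Finset.range (t+1), z^i with hS
  have hSsucc : S = z * S2 + 1 := geom_sum_succ
  have cz_zi : ∀ c : R, Commute c z → Commute c S2 :=
    fun c hc => Commute.sum_right _ _ _ (fun i _ => hc.pow_right i)
  have czS2 : Commute z S2 := cz_zi z (Commute.refl z)
  have cS : ∀ c : R, Commute c z → Commute c S :=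
    fun c hc => Commute.sum_right _ _ _ (fun i _ => hc.pow_right i)
  -- (1-z)*S = 1  and S*(1-z) = 1
  have hSz1 : S*(1-z) = 1 := by
    have := geom_sum_mul z (t+1)
    rw [hzt, zero_sub] at this
    calc S*(1-z) = -(S*(z-1)) := by noncomm_ring
      _ = -(-1) := by rw [hS, this]
      _ = 1 := neg_neg 1
  have h1zS : (1-z)*S = 1 := by
    rw [((cS (1-z) ((Commute.one_left z).sub_left (Commute.refl z))).eq), hSz1]
  -- (h-1)*S = h-1 and S*(h-1) = h-1
  have hz0 : (h-1)*z = 0 := by rw [sub_mul, one_mul, hhz, sub_self]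
  have zh0 : z*(h-1) = 0 := by rw [mul_sub, mul_one, hzh, sub_self]
  have hh1S : (h-1)*S = h-1 := by
    rw [hSsucc, mul_add, mul_one, ← mul_assoc, hz0, zero_mul, zero_add]
  have hSh1 : S*(h-1) = h-1 := by
    rw [hSsucc, add_mul, one_mul, czS2.eq, mul_assoc, zh0, mul_zero, zero_add]
  have keyL : (h-z)*S = h := by
    have : h - z = (h-1) + (1-z) := by noncomm_ring
    rw [this, add_mul, hh1S, h1zS]; noncomm_ring
  have keyR : S*(h-z) = h := by
    have : h - z = (h-1) + (1-z) := by noncomm_ring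
    rw [this, mul_add, hSh1, hSz1]; noncomm_ring
  have hSh : S*h = S2*z + h := by
    rw [hSsucc, add_mul, one_mul, czS2.eq, mul_assoc, hzh]
  refine ⟨v*S, ?_, ?_, ?_, ?_⟩
  · -- w*h = w
    calc v*S*h = v*(S*h) := by rw [mul_assoc]
      _ = v*(S2*z) + v*h := by rw [hSh, mul_add]
      _ = v*(z*S2) + v := by rw [czS2.eq, hvh]
      _ = v*(z*S2 + 1) := by rw [mul_add, mul_one]
      _ = v*S := by rw [← hSsucc]
  · rw [← mul_assoc, hhv]
  · -- (p+n)*w = h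
    calc (p+n)*(v*S) = ((p*v) + (n*v))*S := by rw [← mul_assoc, add_mul]
      _ = (h - z)*S := by rw [hpv, hz, sub_neg_eq_add]
      _ = h := keyL
  · -- w*(p+n) = h
    have cpnS : Commute (p+n) S := cS _ (cpz.add_left cnz)
    calc (v*S)*(p+n) = v*(S*(p+n)) := by rw [mul_assoc]
      _ = v*((p+n)*S) := by rw [← cpnS.eq]
      _ = (v*p + v*n)*S := by rw [← mul_assoc, mul_add]
      _ = (h - z)*S := by rw [hvp, hvn, hz, sub_neg_eq_add]
      _ = h := keyL

lemma corner_glob {p0 v0 n0 h : R} {t : ℕ} (hidem : IsIdempotentElem h)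
    (chp : Commute h p0) (chv : Commute h v0) (chn : Commute h n0)
    (cnp : Commute n0 p0)
    (hpv : (p0*v0)*h = h) (hvp : (v0*p0)*h = h)
    (hnt : (n0*h)^(t+1) = 0) :
    ∃ w, w*h = w ∧ h*w = w ∧ ((p0+n0)*h)*w = h ∧ w*((p0+n0)*h) = h := by
  have e1 : (p0*h)*(v0*h) = h := by
    calc (p0*h)*(v0*h) = p0*((h*v0)*h) := by noncomm_ring
      _ = p0*((v0*h)*h) := by rw [chv.eq]
      _ = (p0*v0)*(h*h) := by noncomm_ring
      _ = (p0*v0)*h := by rw [hidem.eq]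
      _ = h := hpv
  have e2 : (v0*h)*(p0*h) = h := by
    calc (v0*h)*(p0*h) = v0*((h*p0)*h) := by noncomm_ring
      _ = v0*((p0*h)*h) := by rw [chp.eq]
      _ = (v0*p0)*(h*h) := by noncomm_ring
      _ = (v0*p0)*h := by rw [hidem.eq]
      _ = h := hvp
  have e3 : (v0*h)*h = v0*h := by rw [mul_assoc, hidem.eq]
  have e4 : h*(v0*h) = v0*h := by rw [← mul_assoc, chv.eq, mul_assoc, hidem.eq]
  have e5 : h*(n0*h) = n0*h := by rw [← mul_assoc, chn.eq, mul_assoc, hidem.eq]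
  have e6 : (n0*h)*h = n0*h := by rw [mul_assoc, hidem.eq]
  have e7 : (n0*h)*(p0*h) = (p0*h)*(n0*h) := by
    have c1 : Commute n0 (p0*h) := cnp.mul_right chn.symm
    have c2 : Commute h (p0*h) := chp.mul_right (Commute.refl h)
    exact (c1.mul_left c2).eq
  obtain ⟨w, hw1, hw2, hw3, hw4⟩ := corner_unit e1 e2 e3 e4 e5 e6 e7 hnt
  refine ⟨w, hw1, hw2, ?_, ?_⟩
  · rw [add_mul]; exact hw3
  · rw [add_mul]; exact hw4

theorem main_ring {R : Type*} [Ring R] [StarRing R] {Q P Qd : R}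
    (hQd : IsDrazin Q Qd) (hQs : IsStarDMP Q) (hP2s : IsStarDMP (P*P))
    (hQP : Q*P = P*Q) (hnil : IsNilpotent (Qd*P)) : IsStarDMP (Q+P) := by
  obtain ⟨k, hk1, hk2, hk3⟩ := id hQd
  have cQP : Commute Q P := hQP
  have cPQd : Commute P Qd := drazin_comm hQd hQP.symm
  have cQQd : Commute Q Qd := hk3
  set e : R := Q*Qd with he
  have he_star : star e = e := starDMP_proj hQs hQd
  have he_idem : IsIdempotentElem e := drazin_idem hQd
  have ceP : Commute e P := Commute.mul_left cQP cPQd.symm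
  have ceQ : Commute e Q := Commute.mul_left (Commute.refl Q) cQQd.symm
  have ceQd : Commute e Qd := Commute.mul_left cQQd (Commute.refl Qd)
  obtain ⟨m, hm, x, hxMP, hxG⟩ := hP2s
  set a : R := (P*P)^m with ha
  have hxd : IsDrazin a x := groupinv_drazin hxG
  have cPa : Commute P a := ((Commute.refl P).mul_right (Commute.refl P)).pow_right m
  have cPx : Commute P x := drazin_comm hxd cPa.eq
  have cQa : Commute Q a := (cQP.mul_right cQP).pow_right m
  have cQx : Commute Q x := drazin_comm hxd cQa.eq
  have cQdP : Commute Qd P := cPQd.symm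
  have cQda : Commute Qd a := (cQdP.mul_right cQdP).pow_right m
  have cQdx : Commute Qd x := drazin_comm hxd cQda.eq
  have cea : Commute e a := Commute.mul_left cQa cQda
  have cex : Commute e x := drazin_comm hxd cea.eq
  have cax : Commute a x := hxG.2.2
  set g : R := a*x with hg
  have hg_star : star g = g := hxMP.2.2.1
  have hg_idem : IsIdempotentElem g := by
    unfold IsIdempotentElem
    rw [mul_assoc, ← mul_assoc x a x, hxG.2.1]
  have ceg : Commute e g := cea.mul_right cex
  have cQg : Commute Q g := cQa.mul_right cQx
  have cPg : Commute P g := cPa.mul_right cPx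
  -- nilpotency inputs
  obtain ⟨s, hs⟩ := hnil
  have hQe : Q^(k+1) * e = Q^(k+1) := by
    have hsh := drazin_shift hk1 (k+1) (Nat.le_succ k)
    calc Q^(k+1)*e = Q^(k+1)*(Q*Qd) := by rw [he]
      _ = Q^(k+2)*Qd := by rw [← mul_assoc, ← pow_succ]
      _ = Qd*Q^(k+2) := (cQQd.pow_left (k+2)).eq
      _ = Q^(k+1) := hsh
  have hQ1e : Q^(k+1) * (1-e) = 0 := by rw [mul_sub, mul_one, hQe, sub_self]
  have hPe : P*e = Q*(Qd*P) := by
    rw [he, ← mul_assoc, ← hQP, mul_assoc, cPQd.eq]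
  have cQ_QdP : Commute Q (Qd*P) := cQQd.mul_right cQP
  have hn1 : (P*e)^(s+1) = 0 := by
    rw [hPe, cQ_QdP.mul_pow, pow_succ (Qd*P) s, hs, zero_mul, mul_zero]
  have caax : Commute a (a*x) := (Commute.refl a).mul_right cax
  have ha_g : a*g = a := by rw [hg, caax.eq]; exact hxG.1
  -- corner 1
  obtain ⟨w1, hw11, hw12, hw13, hw14⟩ :=
    corner_glob (p0 := Q) (v0 := Qd) (n0 := P) (t := s) he_idem ceQ ceQd ceP cQP.symm
      (by rw [← he, he_idem.eq]) (by rw [← cQQd.eq, ← he, he_idem.eq]) hn1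
  -- corner 2
  set h2 : R := g*(1-e) with hh2
  have c1eg : Commute (1-e) g := (Commute.one_left g).sub_left ceg
  have h1e_idem : IsIdempotentElem (1-e) := he_idem.one_sub
  have h2_idem : IsIdempotentElem h2 := by
    unfold IsIdempotentElem
    rw [hh2]
    calc (g*(1-e))*(g*(1-e)) = g*((1-e)*g)*(1-e) := by noncomm_ring
      _ = g*(g*(1-e))*(1-e) := by rw [c1eg.eq]
      _ = (g*g)*((1-e)*(1-e)) := by noncomm_ring
      _ = g*(1-e) := by rw [hg_idem.eq, h1e_idem.eq]
  set v0 : R := P^(2*m-1)*x with hv0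
  have hexp : 2*m-1+1 = 2*m := by omega
  have hPa' : a = P^(2*m) := by rw [ha, ← sq, ← pow_mul]
  have hPv0 : P*v0 = g := by
    calc P*v0 = (P*P^(2*m-1))*x := by rw [hv0, ← mul_assoc]
      _ = P^(2*m-1+1)*x := by rw [← pow_succ']
      _ = P^(2*m)*x := by rw [hexp]
      _ = a*x := by rw [← hPa']
      _ = g := by rw [← hg]
  have hv0P : v0*P = g := by
    calc v0*P = P^(2*m-1)*(x*P) := by rw [hv0, mul_assoc]
      _ = P^(2*m-1)*(P*x) := by rw [← cPx.eq]
      _ = (P^(2*m-1)*P)*x := by rw [← mul_assoc]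
      _ = P^(2*m-1+1)*x := by rw [← pow_succ]
      _ = P^(2*m)*x := by rw [hexp]
      _ = a*x := by rw [← hPa']
      _ = g := by rw [← hg]
  have ch2P : Commute h2 P := Commute.mul_left cPg.symm ((Commute.one_left P).sub_left ceP)
  have ch2Q : Commute h2 Q := Commute.mul_left cQg.symm ((Commute.one_left Q).sub_left ceQ)
  have ce_v0 : Commute e v0 := (ceP.pow_right (2*m-1)).mul_right cex
  have ca_v0 : Commute a v0 := (cPa.symm.pow_right (2*m-1)).mul_right cax
  have cx_v0 : Commute x v0 := (cPx.symm.pow_right (2*m-1)).mul_right (Commute.refl x)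
  have cg_v0 : Commute g v0 := Commute.mul_left ca_v0 cx_v0
  have ch2v0 : Commute h2 v0 :=
    Commute.mul_left cg_v0 ((Commute.one_left v0).sub_left ce_v0)
  have hgh2 : g*h2 = h2 := by rw [hh2, ← mul_assoc, hg_idem.eq]
  have hQh2 : (Q*h2)^(k+1) = 0 := by
    have cQh2 : Commute Q h2 := ch2Q.symm
    have : Q^(k+1)*h2 = 0 := by
      rw [hh2, ← mul_assoc, (cQg.pow_left (k+1)).eq, mul_assoc, hQ1e, mul_zero]
    calc (Q*h2)^(k+1) = Q^(k+1)*h2^(k+1) := cQh2.mul_pow (k+1)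
      _ = Q^(k+1)*h2 := by rw [h2_idem.pow_succ_eq k]
      _ = 0 := this
  obtain ⟨w2, hw21, hw22, hw23, hw24⟩ :=
    corner_glob (p0 := P) (v0 := v0) (n0 := Q) (t := k) h2_idem ch2P ch2v0 ch2Q cQP
      (by rw [hPv0, hgh2]) (by rw [hv0P, hgh2]) hQh2
  -- assemble
  have heh2 : e*h2 = 0 := by
    have he1e : e*(1-e) = 0 := by rw [mul_sub, mul_one, he_idem.eq, sub_self]
    calc e*h2 = (e*g)*(1-e) := by rw [hh2, ← mul_assoc]
      _ = (g*e)*(1-e) := by rw [ceg.eq]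
      _ = g*(e*(1-e)) := by rw [mul_assoc]
      _ = 0 := by rw [he1e, mul_zero]
  have hh2e : h2*e = 0 := by
    have h1ee : (1-e)*e = 0 := by rw [sub_mul, one_mul, he_idem.eq, sub_self]
    rw [hh2, mul_assoc, h1ee, mul_zero]
  set hh : R := e + h2 with hhh
  have hh_idem : IsIdempotentElem hh := by
    unfold IsIdempotentElem
    rw [hhh, add_mul, mul_add, mul_add, he_idem.eq, h2_idem.eq, heh2, hh2e]
    abel
  have hh_star : star hh = hh := by
    have : star h2 = h2 := by
      rw [hh2, StarMul.star_mul, star_sub, star_one, he_star, hg_star, c1eg.eq]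
    rw [hhh, star_add, he_star, this]
  set M : R := Q + P with hM
  have cMe : Commute M e := ceQ.symm.add_left ceP.symm
  have cMh2 : Commute M h2 := ch2Q.symm.add_left ch2P.symm
  have cMhh : Commute M hh := cMe.add_right cMh2
  -- w-M relations
  have hw1M : w1*M = e := by
    calc w1*M = (w1*e)*M := by rw [hw11]
      _ = w1*(M*e) := by rw [mul_assoc, ← cMe.eq]
      _ = e := hw14
  have hMw1 : M*w1 = e := by
    calc M*w1 = M*(e*w1) := by rw [hw12]
      _ = (M*e)*w1 := by rw [← mul_assoc]
      _ = e := hw13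
  have hPQ : (P+Q)*h2 = M*h2 := by rw [hM, add_comm P Q]
  have hw2M : w2*M = h2 := by
    calc w2*M = (w2*h2)*M := by rw [hw21]
      _ = w2*(M*h2) := by rw [mul_assoc, ← cMh2.eq]
      _ = w2*((P+Q)*h2) := by rw [hPQ]
      _ = h2 := by rw [← mul_assoc]; rw [← mul_assoc] at hw24; exact hw24
  have hMw2 : M*w2 = h2 := by
    calc M*w2 = M*(h2*w2) := by rw [hw22]
      _ = (M*h2)*w2 := by rw [← mul_assoc]
      _ = ((P+Q)*h2)*w2 := by rw [hPQ]
      _ = h2 := hw23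
  set u : R := w1 + w2 with hu
  have huM : u*M = hh := by rw [hu, add_mul, hw1M, hw2M, hhh]
  have hMu : M*u = hh := by rw [hu, mul_add, hMw1, hMw2, hhh]
  have huh : u*hh = u := by
    have hw1h2 : w1*h2 = 0 := by
      rw [← hw11, mul_assoc, heh2, mul_zero]
    have hw2e : w2*e = 0 := by
      rw [← hw21, mul_assoc, hh2e, mul_zero]
    rw [hu, hhh, add_mul, mul_add, mul_add, hw11, hw21, hw1h2, hw2e]
    abel
  have hhu : hh*u = u := by
    have hew2 : e*w2 = 0 := by
      rw [← hw22, ← mul_assoc, heh2, zero_mul]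
    have hh2w1 : h2*w1 = 0 := by
      rw [← hw12, ← mul_assoc, hh2e, zero_mul]
    rw [hu, hhh, add_mul, mul_add, mul_add, hw12, hw22, hew2, hh2w1]
    abel
  -- nilpotent part
  set f : R := (1-e)*(1-g) with hf
  have hfh : (1:R) - hh = f := by
    calc (1:R) - hh = 1 - (e + g*(1-e)) := by rw [hhh, hh2]
      _ = 1 - e - g + g*e := by noncomm_ring
      _ = 1 - e - g + e*g := by rw [← ceg.eq]
      _ = (1-e)*(1-g) := by noncomm_ring
      _ = f := by rw [← hf]
  have c1e1g : Commute (1-e) (1-g) :=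
    ((Commute.one_left (1-g)).sub_left (((Commute.one_right e)).sub_right ceg))
  have f_idem : IsIdempotentElem f := by
    have h1g_idem : IsIdempotentElem (1-g) := hg_idem.one_sub
    unfold IsIdempotentElem
    rw [hf]
    calc ((1-e)*(1-g))*((1-e)*(1-g)) = (1-e)*((1-g)*(1-e))*(1-g) := by noncomm_ring
      _ = (1-e)*((1-e)*(1-g))*(1-g) := by rw [← c1e1g.eq]
      _ = ((1-e)*(1-e))*((1-g)*(1-g)) := by noncomm_ring
      _ = (1-e)*(1-g) := by rw [h1e_idem.eq, h1g_idem.eq]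
  have cQf : Commute Q f :=
    (((Commute.one_right Q)).sub_right ceQ.symm).mul_right (((Commute.one_right Q)).sub_right cQg)
  have cPf : Commute P f :=
    (((Commute.one_right P)).sub_right ceP.symm).mul_right (((Commute.one_right P)).sub_right cPg)
  have cQPf : Commute Q (P*f) := cQP.mul_right cQf
  have hQf_nil : IsNilpotent (Q*f) := by
    refine ⟨k+1, ?_⟩
    rw [cQf.mul_pow, f_idem.pow_succ_eq k, hf, ← mul_assoc, hQ1e, zero_mul]
  have hPf_nil : IsNilpotent (P*f) := by
    refine ⟨2*m, ?_⟩
    have hfpow : f^(2*m) = f := by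
      have := f_idem.pow_succ_eq (2*m-1)
      rwa [hexp] at this
    have haf : a*f = 0 := by
      have ca1e : Commute a (1-e) := (Commute.one_right a).sub_right cea.symm
      have hag0 : a*(1-g) = 0 := by rw [mul_sub, mul_one, ha_g, sub_self]
      rw [hf, ← mul_assoc, ca1e.eq, mul_assoc, hag0, mul_zero]
    rw [cPf.mul_pow, hfpow, ← hPa', haf]
  have cQfPf : Commute (Q*f) (P*f) :=
    Commute.mul_left cQPf (cPf.symm.mul_right (Commute.refl f))
  have hMf : M*(1-hh) = Q*f + P*f := by rw [hfh, hM, add_mul]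
  obtain ⟨T, hT⟩ := cQfPf.isNilpotent_add hQf_nil hPf_nil
  have hTn : (M*(1-hh))^T = 0 := by rw [hMf]; exact hT
  exact starDMP_of_split hh_idem hh_star cMhh.eq huh hhu huM hMu hTn

lemma isNilpotent_swap {R : Type*} [Ring R] {a b : R} (h : IsNilpotent (a*b)) :
    IsNilpotent (b*a) := by
  obtain ⟨t, ht⟩ := h
  have key : ∀ t, (b*a)^(t+1) = b*(a*b)^t*a := by
    intro t
    induction t with
    | zero => simp
    | succ t ih =>
      calc (b*a)^(t+1+1) = (b*a)^(t+1)*(b*a) := by rw [pow_succ]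
        _ = (b*((a*b)^t)*a)*(b*a) := by rw [ih]
        _ = b*((a*b)^t*(a*b))*a := by noncomm_ring
        _ = b*(a*b)^(t+1)*a := by rw [← pow_succ]
  exact ⟨t+1, by rw [key, ht, mul_zero, zero_mul]⟩

lemma EP_pow {R : Type*} [Ring R] [StarRing R] {a x : R} (hMP : IsMP a x) (hG : IsGroupInv a x)
    {j : ℕ} (hj : 1 ≤ j) : IsMP (a^j) (x^j) ∧ IsGroupInv (a^j) (x^j) := by
  obtain ⟨i, rfl⟩ : ∃ i, j = i + 1 := ⟨j - 1, by omega⟩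
  have cax : Commute a x := hG.2.2
  have hxx : (a*x)*x = x := by rw [hG.2.2]; exact hG.2.1
  have eidem : IsIdempotentElem (a*x) := by
    unfold IsIdempotentElem
    rw [mul_assoc, ← mul_assoc x a x, hG.2.1]
  have exa : IsIdempotentElem (x*a) := by
    unfold IsIdempotentElem
    rw [← hG.2.2]; exact eidem.eq
  have key1 : a^(i+1) * x^(i+1) = a*x := by rw [← cax.mul_pow, eidem.pow_succ_eq i]
  have key2 : x^(i+1) * a^(i+1) = a*x := by
    rw [← cax.symm.mul_pow, exa.pow_succ_eq i, ← hG.2.2]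
  have mpa : a^(i+1) * x^(i+1) * a^(i+1) = a^(i+1) := by
    rw [key1]
    calc (a*x)*a^(i+1) = ((a*x)*a)*a^i := by rw [pow_succ' a i, ← mul_assoc]
      _ = a*a^i := by rw [hG.1]
      _ = a^(i+1) := by rw [← pow_succ']
  have mpx : x^(i+1) * a^(i+1) * x^(i+1) = x^(i+1) := by
    rw [key2]
    calc (a*x)*x^(i+1) = ((a*x)*x)*x^i := by rw [pow_succ' x i, ← mul_assoc]
      _ = x*x^i := by rw [hxx]
      _ = x^(i+1) := by rw [← pow_succ']
  refine ⟨⟨mpa, mpx, ?_, ?_⟩, ⟨mpa, mpx, ?_⟩⟩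
  · rw [key1]; exact hMP.2.2.1
  · rw [key2]; exact hMP.2.2.1
  · rw [key1, key2]

variable {n : ℕ}
local notation "Mat" => Matrix (Fin n) (Fin n) ℂ

lemma dpow (A D : Mat) (j : ℕ) :
    (fromBlocks A 0 0 D)^j = fromBlocks (A^j) 0 0 (D^j) := by
  induction j with
  | zero => simp [fromBlocks_one]
  | succ j ih =>
    rw [pow_succ, ih, fromBlocks_multiply]
    simp [pow_succ]

lemma dstar (A D : Mat) :
    star (fromBlocks A 0 0 D) = fromBlocks (star A) 0 0 (star D) := by
  rw [star_eq_conjTranspose, fromBlocks_conjTranspose]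
  simp [star_eq_conjTranspose]

lemma starDMP_blockdiag {A D : Mat} (hA : IsStarDMP A) (hD : IsStarDMP D) :
    IsStarDMP (fromBlocks A 0 0 D) := by
  obtain ⟨mA, hmA, xA, MPA, GA⟩ := hA
  obtain ⟨mD, hmD, xD, MPD, GD⟩ := hD
  obtain ⟨MPA', GA'⟩ := EP_pow MPA GA (j := mD) hmD
  obtain ⟨MPD', GD'⟩ := EP_pow MPD GD (j := mA) hmA
  rw [← pow_mul] at MPA' GA'
  rw [← pow_mul, Nat.mul_comm mD mA] at MPD' GD'
  refine ⟨mA*mD, Nat.one_le_iff_ne_zero.2 (by positivity), fromBlocks (xA^mD) 0 0 (xD^mA), ?_, ?_⟩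
  · refine ⟨?_, ?_, ?_, ?_⟩
    · rw [dpow, fromBlocks_multiply, fromBlocks_multiply]
      simp [MPA'.1, MPD'.1]
    · rw [dpow, fromBlocks_multiply, fromBlocks_multiply]
      simp [MPA'.2.1, MPD'.2.1]
    · rw [dpow, fromBlocks_multiply]
      simp only [mul_zero, zero_mul, add_zero, zero_add]
      rw [dstar, MPA'.2.2.1, MPD'.2.2.1]
    · rw [dpow, fromBlocks_multiply]
      simp only [mul_zero, zero_mul, add_zero, zero_add]
      rw [dstar, MPA'.2.2.2, MPD'.2.2.2]
  · refine ⟨?_, ?_, ?_⟩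
    · rw [dpow, fromBlocks_multiply, fromBlocks_multiply]
      simp [GA'.1, GD'.1]
    · rw [dpow, fromBlocks_multiply, fromBlocks_multiply]
      simp [GA'.2.1, GD'.2.1]
    · rw [dpow, fromBlocks_multiply, fromBlocks_multiply]
      simp [GA'.2.2, GD'.2.2]

end RingLemmas

variable {A : Type*} [NormedRing A] [StarRing A] [NormedAlgebra ℂ A] [CompleteSpace A]

theorem stmt13 {n : ℕ} (A B C D AD DD : Matrix (Fin n) (Fin n) ℂ)
    (hA : IsStarDMP A) (hD : IsStarDMP D)
    (hBC : IsStarDMP (B * C)) (hCB : IsStarDMP (C * B))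
    (hAD : IsDrazin A AD) (hDD : IsDrazin D DD)
    (h1 : A * B = B * D) (h2 : D * C = C * A)
    (h3 : star A * B = B * star D) (h4 : star D * C = C * star A)
    (h5 : IsNilpotent (AD * B * (DD * C))) :
    IsStarDMP (Matrix.fromBlocks A B C D) := by
  obtain ⟨kA, ha1, ha2, ha3⟩ := hAD
  obtain ⟨kD, hd1, hd2, hd3⟩ := hDD
  have hM : Matrix.fromBlocks A B C D = fromBlocks A 0 0 D + fromBlocks 0 B C 0 := by
    rw [fromBlocks_add]; simp
  have hQd : IsDrazin (fromBlocks A 0 0 D) (fromBlocks AD 0 0 DD) := by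
    refine ⟨max kA kD, ?_, ?_, ?_⟩
    · have e1 := drazin_shift ha1 (max kA kD) (Nat.le_max_left kA kD)
      have e2 := drazin_shift hd1 (max kA kD) (Nat.le_max_right kA kD)
      rw [dpow A D, dpow A D, fromBlocks_multiply]
      simp only [mul_zero, zero_mul, add_zero, zero_add, e1, e2]
    · rw [dpow AD DD, fromBlocks_multiply]
      simp only [mul_zero, zero_mul, add_zero, zero_add, ha2, hd2]
    · rw [fromBlocks_multiply, fromBlocks_multiply]
      simp only [mul_zero, zero_mul, add_zero, zero_add, ha3, hd3]
  have hQs : IsStarDMP (fromBlocks A 0 0 D) := starDMP_blockdiag hA hD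
  have hPP : (fromBlocks 0 B C 0 : Matrix _ _ ℂ) * fromBlocks 0 B C 0
      = fromBlocks (B*C) 0 0 (C*B) := by
    rw [fromBlocks_multiply]; simp
  have hP2s : IsStarDMP ((fromBlocks 0 B C 0 : Matrix _ _ ℂ) * fromBlocks 0 B C 0) := by
    rw [hPP]; exact starDMP_blockdiag hBC hCB
  have hQP : (fromBlocks A 0 0 D : Matrix _ _ ℂ) * fromBlocks 0 B C 0
      = fromBlocks 0 B C 0 * fromBlocks A 0 0 D := by
    rw [fromBlocks_multiply, fromBlocks_multiply]
    simp [h1, h2]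
  have hQdP : (fromBlocks AD 0 0 DD : Matrix _ _ ℂ) * fromBlocks 0 B C 0
      = fromBlocks 0 (AD*B) (DD*C) 0 := by
    rw [fromBlocks_multiply]; simp
  have hnilQdP : IsNilpotent ((fromBlocks AD 0 0 DD : Matrix _ _ ℂ) * fromBlocks 0 B C 0) := by
    have h5' : IsNilpotent ((DD*C)*(AD*B)) := isNilpotent_swap h5
    obtain ⟨t1, ht1⟩ := h5
    obtain ⟨t2, ht2⟩ := h5'
    have hsq : ((fromBlocks AD 0 0 DD : Matrix _ _ ℂ) * fromBlocks 0 B C 0)^2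
        = fromBlocks ((AD*B)*(DD*C)) 0 0 ((DD*C)*(AD*B)) := by
      rw [hQdP, pow_two, fromBlocks_multiply]; simp
    refine ⟨2*(max t1 t2), ?_⟩
    rw [pow_mul, hsq, dpow, pow_eq_zero_of_le (Nat.le_max_left t1 t2) ht1,
      pow_eq_zero_of_le (Nat.le_max_right t1 t2) ht2, fromBlocks_zero]
  rw [hM]
  exact main_ring hQd hQs hP2s hQP hnilQdP
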